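/- Let Z ⪰ 0 be a d×d PSD matrix with λ_min(Z) ≤ 1, α > 0, and A = (αZ + cI)⁻² where c ∈ R is such that αZ + cI ≻ 0 and tr(A) = 1. Then ⟨A, Z⟩ ≤ √d/α + λ_min(Z). -/

import Mathlib

open Matrix Finset

theorem inner_A_Z_le (d : ℕ) (Z : Matrix (Fin d) (Fin d) ℝ) (hZ : Z.PosSemidef)
    (μ α c : ℝ) (hα : 0 < α)
    (hμmin : ∀ i, μ ≤ hZ.isHermitian.eigenvalues i)
    (hμmem : ∃ i, hZ.isHermitian.eigenvalues i = μ)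
    (hμ1 : μ ≤ 1)
    (hpos : (α • Z + c • (1 : Matrix (Fin d) (Fin d) ℝ)).PosDef)
    (A : Matrix (Fin d) (Fin d) ℝ)
    (hA : A = ((α • Z + c • (1 : Matrix (Fin d) (Fin d) ℝ)) ^ 2)⁻¹)
    (htr : A.trace = 1) :
    (A * Z).trace ≤ Real.sqrt d / α + μ := by
  classical
  set M := α • Z + c • (1 : Matrix (Fin d) (Fin d) ℝ) with hMdef
  have hHerm : M.IsHermitian := hpos.isHermitian
  set U : Matrix (Fin d) (Fin d) ℝ := (hHerm.eigenvectorUnitary : Matrix (Fin d) (Fin d) ℝ) with hUdef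
  have hU1 : U * star U = 1 := Matrix.mem_unitaryGroup_iff.mp hHerm.eigenvectorUnitary.2
  have hU1' : star U * U = 1 := Matrix.mem_unitaryGroup_iff'.mp hHerm.eigenvectorUnitary.2
  set ν : Fin d → ℝ := hHerm.eigenvalues with hνdef
  have hνpos : ∀ i, 0 < ν i := hpos.eigenvalues_pos
  -- conjugation helper
  set conj : (Fin d → ℝ) → Matrix (Fin d) (Fin d) ℝ :=
    fun f => U * diagonal f * star U with hconj
  have hconj_mul : ∀ f g, conj f * conj g = conj (f * g) := by
    intro f g
    simp only [hconj]
    rw [Matrix.mul_assoc, Matrix.mul_assoc, ← Matrix.mul_assoc (star U),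
      ← Matrix.mul_assoc (star U), hU1', Matrix.one_mul, ← Matrix.mul_assoc,
      ← Matrix.mul_assoc, Matrix.mul_assoc U, diagonal_mul_diagonal]
    rfl
  have hconj_one : conj 1 = 1 := by
    simp only [hconj]
    have hd1 : Matrix.diagonal (1 : Fin d → ℝ) = 1 := Matrix.diagonal_one
    rw [hd1, Matrix.mul_one, hU1]
  have hconj_trace : ∀ f, (conj f).trace = ∑ i, f i := by
    intro f
    simp only [hconj]
    rw [Matrix.trace_mul_cycle, hU1', Matrix.one_mul, trace_diagonal]
  have hconj_smul : ∀ (r : ℝ) f, conj (r • f) = r • conj f := by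
    intro r f
    simp only [hconj, diagonal_smul, Matrix.smul_mul, Matrix.mul_smul]
  have hconj_sub : ∀ f g : Fin d → ℝ, conj (fun i => f i - g i) = conj f - conj g := by
    intro f g
    simp only [hconj]
    rw [← diagonal_sub, Matrix.mul_sub, Matrix.sub_mul]
  have hMspec : M = conj ν := by
    have := hHerm.spectral_theorem
    simpa [hconj] using this
  have hconst : conj (fun _ => c) = c • (1 : Matrix (Fin d) (Fin d) ℝ) := by
    have : (fun _ : Fin d => c) = c • (1 : Fin d → ℝ) := by funext i; simp
    rw [this, hconj_smul, hconj_one]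
  have hMZ : Z = conj (fun i => α⁻¹ * (ν i - c)) := by
    have h1 : (fun i => α⁻¹ * (ν i - c)) = α⁻¹ • (fun i => ν i - c) := by
      funext i; simp [Pi.smul_apply, smul_eq_mul]
    rw [h1, hconj_smul, hconj_sub ν (fun _ => c), ← hMspec, hconst]
    rw [hMdef]
    rw [add_sub_cancel_right, smul_smul, inv_mul_cancel₀ hα.ne', one_smul]
  have hAspec : A = conj (fun i => ((ν i) ^ 2)⁻¹) := by
    rw [hA]
    have hsq : M ^ 2 = conj (fun i => (ν i) ^ 2) := by
      rw [sq, hMspec, hconj_mul]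
      have : (ν * ν) = fun i => (ν i) ^ 2 := by funext i; simp [sq]
      rw [this]
    rw [hsq]
    apply inv_eq_right_inv
    rw [hconj_mul]
    have : ((fun i => (ν i) ^ 2) * fun i => ((ν i) ^ 2)⁻¹) = 1 := by
      funext i
      simp [Pi.mul_apply, mul_inv_cancel₀ (pow_ne_zero 2 (hνpos i).ne')]
    rw [this, hconj_one]
  have htr' : ∑ i, ((ν i) ^ 2)⁻¹ = 1 := by
    rw [← hconj_trace, ← hAspec, htr]
  have hAZ : (A * Z).trace = α⁻¹ * (∑ i, (ν i)⁻¹ - c) := by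
    rw [hAspec, hMZ, hconj_mul, hconj_trace]
    have hpt : ∀ i : Fin d, ((fun i => ((ν i) ^ 2)⁻¹) * fun i => α⁻¹ * (ν i - c)) i
        = α⁻¹ * ((ν i)⁻¹ - c * ((ν i) ^ 2)⁻¹) := by
      intro i
      have h := (hνpos i).ne'
      simp only [Pi.mul_apply]
      field_simp
    rw [Finset.sum_congr rfl fun i _ => hpt i, ← Finset.mul_sum,
      Finset.sum_sub_distrib, ← Finset.mul_sum, htr', mul_one]
  -- Cauchy-Schwarz part
  have h0 : 0 ≤ ∑ i, (ν i)⁻¹ := Finset.sum_nonneg fun i _ => (inv_pos.mpr (hνpos i)).le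
  have hS : ∑ i, (ν i)⁻¹ ≤ Real.sqrt d := by
    have h1 : (∑ i, (ν i)⁻¹) ^ 2 ≤ (d : ℝ) * ∑ i, ((ν i)⁻¹) ^ 2 := by
      have := sq_sum_le_card_mul_sum_sq (s := (Finset.univ : Finset (Fin d)))
        (f := fun i => (ν i)⁻¹)
      simpa using this
    have h2 : ∑ i, ((ν i)⁻¹) ^ 2 = 1 := by
      simpa [inv_pow] using htr'
    rw [h2, mul_one] at h1
    have hd0 : (0:ℝ) ≤ (d:ℝ) := Nat.cast_nonneg d
    nlinarith [Real.sq_sqrt hd0, Real.sqrt_nonneg (d:ℝ)]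
  -- -c ≤ α μ part
  obtain ⟨i₀, hi₀⟩ := hμmem
  set v : Fin d → ℝ := ⇑(hZ.isHermitian.eigenvectorBasis i₀) with hvdef
  have hv0 : v ≠ 0 := by
    have hne := hZ.isHermitian.eigenvectorBasis.orthonormal.ne_zero i₀
    intro h
    apply hne
    ext j
    exact congrFun h j
  have hMv : M *ᵥ v = (α * μ + c) • v := by
    have hz : Z *ᵥ v = μ • v := by
      have := hZ.isHermitian.mulVec_eigenvectorBasis i₀
      rwa [hi₀] at this
    rw [hMdef, add_mulVec, smul_mulVec, smul_mulVec, one_mulVec, hz,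
      smul_smul, add_smul]
  have hq := hpos.dotProduct_mulVec_pos hv0
  rw [hMv] at hq
  have hdp : star v ⬝ᵥ ((α * μ + c) • v) = (α * μ + c) * (v ⬝ᵥ v) := by
    simp [dotProduct_smul, smul_eq_mul]
  rw [hdp] at hq
  have hvv : 0 ≤ v ⬝ᵥ v := Finset.sum_nonneg fun i _ => mul_self_nonneg _
  have hc : -c ≤ α * μ := by nlinarith
  -- combine
  rw [hAZ]
  have key : α⁻¹ * (∑ i, (ν i)⁻¹ - c) ≤ α⁻¹ * (Real.sqrt d + α * μ) := by
    apply mul_le_mul_of_nonneg_left _ (inv_nonneg.mpr hα.le)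
    linarith
  refine key.trans (le_of_eq ?_)
  field_simp
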